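/- arXiv:2601.18332 — 3 statements merged into one kernel-verified Lean document; each statement's English description precedes it below -/
import Mathlib

section
/- Let u_n be the normalized Maclaurin coefficients of e^{pz}·I_ν(z), i.e. u_n = Γ(ν+1) times the n-th Maclaurin coefficient of z ↦ e^{pz}·G_ν(z). Then u_0 = 1, u_1 = p, and for every natural number n ≥ 1, u_{n+1} = (p(2ν+2n+1)/((n+1)(2ν+n+1)))·u_n + ((1−p²)/((n+1)(2ν+n+1)))·u_{n−1}. -/
open Complex

/-- The entire part of the modified Bessel function of the first kind:
`I_ν(z) = (z/2)^ν * modBesselSeries ν z`. -/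
noncomputable def modBesselSeries (ν : ℂ) (z : ℂ) : ℂ :=
  ∑' k : ℕ, z ^ (2 * k) / (4 ^ k * (Nat.factorial k : ℂ) * Complex.Gamma (ν + (k : ℂ) + 1))

/-- The normalized `n`-th Maclaurin coefficient of `h(z) * I_ν(z)`:
`Γ(ν+1)` times the `n`-th Maclaurin coefficient of `z ↦ h z * modBesselSeries ν z`. -/
noncomputable def normCoeff (ν : ℂ) (h : ℂ → ℂ) (n : ℕ) : ℂ :=
  Complex.Gamma (ν + 1) *
    (iteratedDeriv n (fun z => h z * modBesselSeries ν z) 0 / (Nat.factorial n : ℂ))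

noncomputable def ccoef (ν : ℂ) (k : ℕ) : ℂ :=
  1 / (4 ^ k * (Nat.factorial k : ℂ) * Complex.Gamma (ν + (k : ℂ) + 1))

noncomputable def dcoef (ν : ℂ) (m : ℕ) : ℂ :=
  if m % 2 = 0 then ccoef ν (m / 2) else 0

noncomputable def ecoef (p : ℂ) (i : ℕ) : ℂ := p ^ i / (Nat.factorial i : ℂ)

noncomputable def scoef (ν p : ℂ) (n : ℕ) : ℂ :=
  ∑ i ∈ Finset.range (n + 1), ecoef p i * dcoef ν (n - i)

section aux

variable {ν p : ℂ} (hν : ∀ n : ℕ, 2 * ν + (n : ℂ) + 1 ≠ 0)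

include hν

lemma nuk_ne (k : ℕ) : ν + (k : ℂ) + 1 ≠ 0 := by
  have h := hν (2 * k + 1)
  intro h0
  apply h
  push_cast
  linear_combination 2 * h0

lemma gamma_ne (k : ℕ) : Complex.Gamma (ν + (k : ℂ) + 1) ≠ 0 := by
  apply Complex.Gamma_ne_zero
  intro m hm
  have h := hν (2 * (m + k) + 1)
  apply h
  push_cast
  linear_combination 2 * hm

lemma ccoef_ne (k : ℕ) : ccoef ν k ≠ 0 := by
  rw [ccoef]
  apply div_ne_zero one_ne_zero
  apply mul_ne_zero (mul_ne_zero (pow_ne_zero _ (by norm_num)) _) (gamma_ne hν k)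
  exact_mod_cast (Nat.factorial_ne_zero k)

lemma ccoef_rec (k : ℕ) :
    ccoef ν k = (2 * ((k : ℂ) + 1)) * (2 * ν + 2 * ((k : ℂ) + 1)) * ccoef ν (k + 1) := by
  have hG : Complex.Gamma (ν + ((k : ℂ) + 1) + 1) = (ν + (k : ℂ) + 1) * Complex.Gamma (ν + (k : ℂ) + 1) := by
    have := Complex.Gamma_add_one (ν + (k : ℂ) + 1) (nuk_ne hν k)
    rw [← this]
    ring_nf
  rw [ccoef, ccoef]
  push_cast [Nat.factorial_succ, pow_succ]
  rw [hG]
  have h1 : Complex.Gamma (ν + (k : ℂ) + 1) ≠ 0 := gamma_ne hν k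
  have h2 : ((Nat.factorial k : ℂ)) ≠ 0 := by exact_mod_cast Nat.factorial_ne_zero k
  have h3 : ((4 : ℂ)) ^ k ≠ 0 := pow_ne_zero _ (by norm_num)
  have h4 : ν + (k : ℂ) + 1 ≠ 0 := nuk_ne hν k
  have h5 : ((k : ℂ) + 1) ≠ 0 := Nat.cast_add_one_ne_zero k
  field_simp
  ring

omit hν in
lemma dcoef_even (k : ℕ) : dcoef ν (2 * k) = ccoef ν k := by
  rw [dcoef]
  simp [Nat.mul_mod_right, Nat.mul_div_cancel_left k (by norm_num : 0 < 2)]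

omit hν in
lemma dcoef_odd (k : ℕ) : dcoef ν (2 * k + 1) = 0 := by
  rw [dcoef, if_neg (by omega : ¬(2 * k + 1) % 2 = 0)]

lemma dcoef_rec (m : ℕ) :
    dcoef ν m = ((m : ℂ) + 2) * (2 * ν + (m : ℂ) + 2) * dcoef ν (m + 2) := by
  rcases Nat.even_or_odd m with ⟨k, hk⟩ | ⟨k, hk⟩
  · subst hk
    have h1 : k + k = 2 * k := by ring
    have h2 : 2 * k + 2 = 2 * (k + 1) := by ring
    rw [h1, h2, dcoef_even, dcoef_even, ccoef_rec hν k]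
    push_cast
    ring
  · subst hk
    have h2 : 2 * k + 1 + 2 = 2 * (k + 1) + 1 := by ring
    rw [h2, dcoef_odd, dcoef_odd]
    ring

omit hν in
lemma ecoef_rec (i : ℕ) : p * ecoef p i = ((i : ℂ) + 1) * ecoef p (i + 1) := by
  rw [ecoef, ecoef]
  have h2 : ((Nat.factorial i : ℂ)) ≠ 0 := by exact_mod_cast Nat.factorial_ne_zero i
  have h5 : ((i : ℂ) + 1) ≠ 0 := Nat.cast_add_one_ne_zero i
  push_cast [Nat.factorial_succ, pow_succ]
  field_simp

omit hν in
lemma summable_ecoef (z : ℂ) : Summable fun i => ‖ecoef p i * z ^ i‖ := by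
  have := Real.summable_pow_div_factorial (‖p‖ * ‖z‖)
  apply this.congr
  intro i
  rw [ecoef]
  rw [norm_mul, norm_div, norm_pow, norm_pow, Complex.norm_natCast, mul_pow]
  ring

lemma summable_ccoef_z (z : ℂ) : Summable fun k => ‖ccoef ν k * z ^ (2 * k)‖ := by
  apply summable_of_ratio_norm_eventually_le (r := 1 / 2) (by norm_num)
  have hN : ∀ᶠ k : ℕ in Filter.atTop, (‖ν‖ + ‖z‖ ^ 2 : ℝ) ≤ k := by
    have := Filter.eventually_ge_atTop (⌈‖ν‖ + ‖z‖ ^ 2⌉₊)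
    filter_upwards [this] with k hk
    calc (‖ν‖ + ‖z‖ ^ 2 : ℝ) ≤ ⌈‖ν‖ + ‖z‖ ^ 2⌉₊ := Nat.le_ceil _
      _ ≤ k := by exact_mod_cast hk
  filter_upwards [hN] with k hk
  rw [norm_norm, norm_norm]
  have hrec := ccoef_rec hν k
  have hn1 : ‖(2 : ℂ) * ((k : ℂ) + 1)‖ = 2 * ((k : ℝ) + 1) := by
    have hc : ((k : ℂ) + 1) = ((k + 1 : ℕ) : ℂ) := by push_cast; ring
    rw [norm_mul, hc, Complex.norm_natCast]
    push_cast
    norm_num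
  have hnn : ‖ccoef ν k‖ = (2 * ((k : ℝ) + 1)) * ‖2 * ν + 2 * ((k : ℂ) + 1)‖ * ‖ccoef ν (k + 1)‖ := by
    rw [hrec, norm_mul, norm_mul, hn1]
  have hb : (2 * ‖z‖ ^ 2 : ℝ) ≤ (2 * ((k : ℝ) + 1)) * ‖2 * ν + 2 * ((k : ℂ) + 1)‖ := by
    have h1 : (2 * ((k : ℝ) + 1)) ≥ 2 := by
      have : (0 : ℝ) ≤ (k : ℝ) := Nat.cast_nonneg k
      nlinarith
    have h2 : ‖2 * ν + 2 * ((k : ℂ) + 1)‖ ≥ ‖z‖ ^ 2 := by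
      have htri := norm_sub_norm_le (2 * ((k : ℂ) + 1)) (-(2 * ν))
      have hre : (2 * ((k : ℂ) + 1)) - (-(2 * ν)) = 2 * ν + 2 * ((k : ℂ) + 1) := by ring
      rw [hre, norm_neg, hn1] at htri
      have h4 : ‖(2 : ℂ) * ν‖ = 2 * ‖ν‖ := by rw [norm_mul]; norm_num
      rw [h4] at htri
      nlinarith
    nlinarith [norm_nonneg z, norm_nonneg (2 * ν + 2 * ((k : ℂ) + 1)), sq_nonneg (‖z‖)]
  calc ‖ccoef ν (k + 1) * z ^ (2 * (k + 1))‖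
      = ‖ccoef ν (k + 1)‖ * ‖z‖ ^ (2 * k) * ‖z‖ ^ 2 := by
        rw [norm_mul, norm_pow]
        have h2k : 2 * (k + 1) = 2 * k + 2 := by ring
        rw [h2k, pow_add]
        ring
    _ ≤ 1 / 2 * ‖ccoef ν k * z ^ (2 * k)‖ := by
        rw [norm_mul, hnn, norm_pow]
        have hc1 : (0 : ℝ) ≤ ‖ccoef ν (k + 1)‖ := norm_nonneg _
        have hz1 : (0 : ℝ) ≤ ‖z‖ ^ (2 * k) := by positivity
        nlinarith [mul_le_mul_of_nonneg_left hb (mul_nonneg hc1 hz1)]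

lemma summable_dcoef (z : ℂ) : Summable fun m => ‖dcoef ν m * z ^ m‖ := by
  rw [← Function.Injective.summable_iff (f := fun m => ‖dcoef ν m * z ^ m‖)
    (g := fun k : ℕ => 2 * k) (fun a b h => by dsimp only at h; omega) ?_]
  · apply ((summable_ccoef_z hν z).congr ?_)
    intro k
    simp only [Function.comp_apply]
    rw [dcoef_even]
  · intro m hm
    have hodd : m % 2 = 1 := by
      rcases Nat.even_or_odd m with ⟨k, hk⟩ | ⟨k, hk⟩
      · exfalso; exact hm ⟨k, by dsimp only; omega⟩
      · omega
    simp [dcoef, hodd]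

lemma bessel_eq_tsum (z : ℂ) : modBesselSeries ν z = ∑' m, dcoef ν m * z ^ m := by
  have hs : Summable fun k => ccoef ν k * z ^ (2 * k) := (summable_ccoef_z hν z).of_norm
  have h2 : HasSum (fun m => dcoef ν m * z ^ m) (∑' k, ccoef ν k * z ^ (2 * k)) := by
    apply (Function.Injective.hasSum_iff (g := fun k : ℕ => 2 * k) (fun a b h => by dsimp only at h; omega) ?_).1
    · apply HasSum.congr_fun hs.hasSum
      intro k
      simp only [Function.comp_apply]
      rw [dcoef_even]
    · intro m hm
      have hodd : m % 2 = 1 := by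
        rcases Nat.even_or_odd m with ⟨k, hk⟩ | ⟨k, hk⟩
        · exfalso; exact hm ⟨k, by dsimp only; omega⟩
        · omega
      simp [dcoef, hodd]
  rw [h2.tsum_eq]
  rw [modBesselSeries]
  apply tsum_congr
  intro k
  rw [ccoef]
  ring

omit hν in
lemma exp_eq_tsum' (z : ℂ) : Complex.exp (p * z) = ∑' i, ecoef p i * z ^ i := by
  rw [Complex.exp_eq_exp_ℂ, NormedSpace.exp_eq_tsum_div]
  apply tsum_congr
  intro i
  rw [ecoef, mul_pow]
  ring

omit hν in
lemma scoef_mul_pow (z : ℂ) (n : ℕ) :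
    scoef ν p n * z ^ n =
      ∑ i ∈ Finset.range (n + 1), (ecoef p i * z ^ i) * (dcoef ν (n - i) * z ^ (n - i)) := by
  rw [scoef, Finset.sum_mul]
  apply Finset.sum_congr rfl
  intro i hi
  have hle : i ≤ n := by
    have := Finset.mem_range.1 hi; omega
  have : z ^ i * z ^ (n - i) = z ^ n := by
    rw [← pow_add]
    congr 1
    omega
  rw [← this]
  ring

lemma prod_eq_tsum (z : ℂ) :
    Complex.exp (p * z) * modBesselSeries ν z = ∑' n, scoef ν p n * z ^ n := by
  rw [exp_eq_tsum' z, bessel_eq_tsum hν z,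
    tsum_mul_tsum_eq_tsum_sum_range_of_summable_norm (summable_ecoef z) (summable_dcoef hν z)]
  apply tsum_congr
  intro n
  rw [scoef_mul_pow]

lemma hasSeries :
    HasFPowerSeriesOnBall (fun z => Complex.exp (p * z) * modBesselSeries ν z)
      (FormalMultilinearSeries.ofScalars ℂ (scoef ν p)) 0 ⊤ := by
  set T := FormalMultilinearSeries.ofScalars ℂ (scoef ν p) with hT
  have hrad : T.radius = ⊤ := by
    apply FormalMultilinearSeries.radius_eq_top_of_summable_norm
    intro r
    have h0 := summable_norm_sum_mul_range_of_summable_norm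
      (summable_ecoef (p := p) ((r : ℝ) : ℂ)) (summable_dcoef hν ((r : ℝ) : ℂ))
    apply h0.congr
    intro n
    have e1 : ‖T n‖ * (r : ℝ) ^ n = ‖scoef ν p n * (((r : ℝ)) : ℂ) ^ n‖ := by
      rw [norm_mul, norm_pow, Complex.norm_real, Real.norm_of_nonneg r.coe_nonneg, hT,
        FormalMultilinearSeries.ofScalars_norm]
    rw [e1, scoef_mul_pow]
  have hsum : T.sum = fun z => Complex.exp (p * z) * modBesselSeries ν z := by
    funext z
    have h1 : T.sum z = ∑' n, scoef ν p n • z ^ n :=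
      FormalMultilinearSeries.ofScalars_sum_eq (scoef ν p) z
    rw [h1, prod_eq_tsum hν z]
    apply tsum_congr
    intro n
    rw [smul_eq_mul]
  have := T.hasFPowerSeriesOnBall (by rw [hrad]; exact ENNReal.zero_lt_top)
  rw [hrad, hsum] at this
  exact this

lemma coeff_eq (n : ℕ) :
    normCoeff ν (fun z => Complex.exp (p * z)) n = Complex.Gamma (ν + 1) * scoef ν p n := by
  have h := (hasSeries hν (p := p)).factorial_smul (1 : ℂ) n
  rw [FormalMultilinearSeries.ofScalars_apply_eq] at h
  simp only [one_pow, smul_eq_mul, mul_one] at h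
  have hderiv : iteratedDeriv n (fun z => Complex.exp (p * z) * modBesselSeries ν z) 0
      = (Nat.factorial n : ℂ) * scoef ν p n := by
    rw [iteratedDeriv_eq_iteratedFDeriv, ← h]
    simp [nsmul_eq_mul]
  simp only [normCoeff]
  rw [hderiv]
  have hfac : ((Nat.factorial n : ℂ)) ≠ 0 := by exact_mod_cast Nat.factorial_ne_zero n
  field_simp

omit hν in
lemma scoef_reflect (n : ℕ) :
    scoef ν p n = ∑ j ∈ Finset.range (n + 1), ecoef p (n - j) * dcoef ν j := by
  rw [scoef, ← Finset.sum_range_reflect (fun j => ecoef p (n - j) * dcoef ν j) (n + 1)]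
  apply Finset.sum_congr rfl
  intro i hi
  have hle : i ≤ n := by have := Finset.mem_range.1 hi; omega
  congr 2 <;> omega

lemma key_rec (m : ℕ) :
    ((m : ℂ) + 2) * (2 * ν + (m : ℂ) + 2) * scoef ν p (m + 2)
      = p * (2 * ν + 2 * (m : ℂ) + 3) * scoef ν p (m + 1) + (1 - p ^ 2) * scoef ν p m := by
  have h1 : p * scoef ν p (m + 1)
      = ∑ j ∈ Finset.range (m + 3), ((m + 2 - j : ℕ) : ℂ) * (ecoef p (m + 2 - j) * dcoef ν j) := by
    rw [Finset.sum_range_succ]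
    have hz : ((m + 2 - (m + 2) : ℕ) : ℂ) = 0 := by norm_num
    rw [hz, zero_mul, add_zero, scoef_reflect, Finset.mul_sum]
    apply Finset.sum_congr rfl
    intro j hj
    have hle : j ≤ m + 1 := by have := Finset.mem_range.1 hj; omega
    have he := ecoef_rec (p := p) (m + 1 - j)
    have h2 : m + 1 - j + 1 = m + 2 - j := by omega
    rw [h2] at he
    rw [← mul_assoc, mul_comm p (ecoef p (m + 1 - j)), mul_assoc, ← mul_assoc]
    rw [mul_comm (ecoef p (m+1-j)) p, he]
    have h3 : ((m + 1 - j : ℕ) : ℂ) + 1 = ((m + 2 - j : ℕ) : ℂ) := by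
      rw [Nat.cast_sub (by omega), Nat.cast_sub (by omega)]
      push_cast; ring
    rw [h3]
    ring
  have h2 : p ^ 2 * scoef ν p m
      = ∑ j ∈ Finset.range (m + 3),
          ((m + 1 - j : ℕ) : ℂ) * ((m + 2 - j : ℕ) : ℂ) * (ecoef p (m + 2 - j) * dcoef ν j) := by
    rw [Finset.sum_range_succ, Finset.sum_range_succ]
    have hz1 : ((m + 1 - (m + 2) : ℕ) : ℂ) = 0 := by norm_num
    have hz2 : ((m + 1 - (m + 1) : ℕ) : ℂ) = 0 := by norm_num
    rw [hz1, hz2]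
    simp only [zero_mul, add_zero]
    rw [scoef_reflect, Finset.mul_sum]
    apply Finset.sum_congr rfl
    intro j hj
    have hle : j ≤ m := by have := Finset.mem_range.1 hj; omega
    have he1 := ecoef_rec (p := p) (m - j)
    have hh1 : m - j + 1 = m + 1 - j := by omega
    rw [hh1] at he1
    have he2 := ecoef_rec (p := p) (m + 1 - j)
    have hh2 : m + 1 - j + 1 = m + 2 - j := by omega
    rw [hh2] at he2
    have hc1 : ((m - j : ℕ) : ℂ) + 1 = ((m + 1 - j : ℕ) : ℂ) := by
      rw [Nat.cast_sub (by omega), Nat.cast_sub (by omega)]; push_cast; ring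
    have hc2 : ((m + 1 - j : ℕ) : ℂ) + 1 = ((m + 2 - j : ℕ) : ℂ) := by
      rw [Nat.cast_sub (by omega), Nat.cast_sub (by omega)]; push_cast; ring
    calc p ^ 2 * (ecoef p (m - j) * dcoef ν j)
        = p * (p * ecoef p (m - j)) * dcoef ν j := by ring
      _ = p * ((((m - j : ℕ) : ℂ) + 1) * ecoef p (m + 1 - j)) * dcoef ν j := by rw [he1]
      _ = (((m - j : ℕ) : ℂ) + 1) * (p * ecoef p (m + 1 - j)) * dcoef ν j := by ring
      _ = (((m - j : ℕ) : ℂ) + 1) * ((((m + 1 - j : ℕ) : ℂ) + 1) * ecoef p (m + 2 - j)) * dcoef ν j := by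
          rw [he2]
      _ = ((m + 1 - j : ℕ) : ℂ) * ((m + 2 - j : ℕ) : ℂ) * (ecoef p (m + 2 - j) * dcoef ν j) := by
          rw [hc1, hc2]; ring
  have h3 : scoef ν p m
      = ∑ j ∈ Finset.range (m + 3),
          (j : ℂ) * (2 * ν + (j : ℂ)) * (ecoef p (m + 2 - j) * dcoef ν j) := by
    rw [Finset.sum_range_succ' _ (m + 2), Finset.sum_range_succ' _ (m + 1)]
    have hd1 : dcoef ν 1 = 0 := dcoef_odd (ν := ν) 0
    simp only [Nat.cast_zero, zero_mul, mul_zero, add_zero, Nat.cast_one, hd1, mul_zero, zero_mul]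
    have : ∀ j ∈ Finset.range (m + 1),
        ((j + 1 + 1 : ℕ) : ℂ) * (2 * ν + ((j + 1 + 1 : ℕ) : ℂ)) *
          (ecoef p (m + 2 - (j + 1 + 1)) * dcoef ν (j + 1 + 1))
        = ecoef p (m - j) * dcoef ν j := by
      intro j hj
      have hle : j ≤ m := by have := Finset.mem_range.1 hj; omega
      have hsub : m + 2 - (j + 1 + 1) = m - j := by omega
      have hdr := dcoef_rec hν j
      rw [hsub]
      have hcast : ((j + 1 + 1 : ℕ) : ℂ) = (j : ℂ) + 2 := by push_cast; ring
      rw [hcast]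
      have : j + 1 + 1 = j + 2 := by omega
      rw [this]
      calc ((j : ℂ) + 2) * (2 * ν + ((j : ℂ) + 2)) * (ecoef p (m - j) * dcoef ν (j + 2))
          = ecoef p (m - j) * (((j : ℂ) + 2) * (2 * ν + (j : ℂ) + 2) * dcoef ν (j + 2)) := by ring
        _ = ecoef p (m - j) * dcoef ν j := by rw [← hdr]
    rw [Finset.sum_congr rfl this, scoef_reflect]
  have expand : p * (2 * ν + 2 * (m : ℂ) + 3) * scoef ν p (m + 1) + (1 - p ^ 2) * scoef ν p m
      = (2 * ν + 2 * (m : ℂ) + 3) * (p * scoef ν p (m + 1)) + scoef ν p m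
        - p ^ 2 * scoef ν p m := by ring
  rw [expand, h1, h2]
  conv_lhs => rw [scoef_reflect]
  conv_rhs => rw [h3]
  rw [Finset.mul_sum, Finset.mul_sum, ← Finset.sum_add_distrib, ← Finset.sum_sub_distrib]
  apply Finset.sum_congr rfl
  intro j hj
  have hle : j ≤ m + 2 := by have := Finset.mem_range.1 hj; omega
  by_cases hj1 : j ≤ m + 1
  · rw [Nat.cast_sub (by omega : j ≤ m + 2), Nat.cast_sub (by omega : j ≤ m + 1)]
    push_cast
    ring
  · have hje : j = m + 2 := by omega
    subst hje
    simp only [Nat.sub_self, Nat.cast_zero]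
    have hz1 : ((m + 1 - (m + 2) : ℕ) : ℂ) = 0 := by norm_num
    rw [hz1]
    push_cast
    ring

end aux

theorem exp_besselI_coeff_recurrence (ν p : ℂ) (hν : ∀ n : ℕ, 2 * ν + (n : ℂ) + 1 ≠ 0)
    (u : ℕ → ℂ) (hu : ∀ n, u n = normCoeff ν (fun z => Complex.exp (p * z)) n) :
    u 0 = 1 ∧ u 1 = p ∧ (∀ n : ℕ, 1 ≤ n →
      u (n + 1) = (p * (2 * ν + 2 * ((n : ℂ)) + 1) / ((((n : ℂ)) + 1) * (2 * ν + ((n : ℂ)) + 1))) * u n + ((1 - p ^ 2) / ((((n : ℂ)) + 1) * (2 * ν + ((n : ℂ)) + 1))) * u (n - 1)) := by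
  have hG0 : Complex.Gamma (ν + 1) ≠ 0 := by
    have := gamma_ne hν 0
    simpa using this
  have hcoef : ∀ n, u n = Complex.Gamma (ν + 1) * scoef ν p n := by
    intro n
    rw [hu n, coeff_eq hν n]
  refine ⟨?_, ?_, ?_⟩
  · rw [hcoef 0]
    have : scoef ν p 0 = 1 / Complex.Gamma (ν + 1) := by
      rw [scoef]
      simp [ecoef, dcoef, ccoef]
    rw [this]
    field_simp
  · rw [hcoef 1]
    have : scoef ν p 1 = p / Complex.Gamma (ν + 1) := by
      rw [scoef, Finset.sum_range_succ, Finset.sum_range_one]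
      have h1 : dcoef ν 1 = 0 := dcoef_odd (ν := ν) 0
      simp [ecoef, dcoef, ccoef, h1]
      rw [div_eq_mul_inv]
    rw [this]
    field_simp
  · intro n hn
    obtain ⟨m, rfl⟩ : ∃ m, n = m + 1 := ⟨n - 1, by omega⟩
    simp only [Nat.add_sub_cancel]
    rw [hcoef, hcoef, hcoef]
    have key := key_rec hν (p := p) m
    have hd1 : ((m : ℂ) + 1 + 1) ≠ 0 := by
      have : (((m + 2 : ℕ) : ℂ)) ≠ 0 := Nat.cast_ne_zero.2 (by omega)
      push_cast at this
      intro h; apply this; linear_combination h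
    have hd2 : 2 * ν + ((m + 1 : ℕ) : ℂ) + 1 ≠ 0 := hν (m + 1)
    push_cast at hd2 ⊢
    have hd3 : ν * 2 + ((m : ℂ) + 1) + 1 ≠ 0 := by intro h; apply hd2; linear_combination h
    field_simp
    linear_combination key
end

section
/- Let u_n and v_n be the normalized Maclaurin coefficients of e^{pz}·I_ν(z) and of e^{−pz}·I_ν(z) respectively. Then the n-th normalized Maclaurin coefficient of sinh(pz)·I_ν(z) equals (u_n − v_n)/2 for every n ≥ 0; moreover u_0 = 1, u_1 = p, v_0 = 1, v_1 = −p, and for every n ≥ 1: u_{n+1} = (p(2ν+2n+1)/((n+1)(2ν+n+1)))·u_n + ((1−p²)/((n+1)(2ν+n+1)))·u_{n−1} and v_{n+1} = −(p(2ν+2n+1)/((n+1)(2ν+n+1)))·v_n + ((1−p²)/((n+1)(2ν+n+1)))·v_{n−1}. -/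
open Complex

namespace SinhBessel

/-- coefficient of `z^{2k}` in the Bessel entire part -/
noncomputable def bet (ν : ℂ) (k : ℕ) : ℂ :=
  (4 ^ k * (Nat.factorial k : ℂ) * Complex.Gamma (ν + (k : ℂ) + 1))⁻¹

/-- coefficient of `z^n` in `exp (q z)` -/
noncomputable def ec (q : ℂ) (n : ℕ) : ℂ := q ^ n / (Nat.factorial n : ℂ)

/-- Maclaurin coefficients of the Bessel entire part -/
noncomputable def bb (ν : ℂ) (n : ℕ) : ℂ := if 2 ∣ n then bet ν (n / 2) else 0

/-- Maclaurin coefficients of `exp (q z) * modBesselSeries ν z`, diagonal form -/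
noncomputable def d (ν q : ℂ) (n : ℕ) : ℂ :=
  ∑ k ∈ Finset.range (n / 2 + 1), ec q (n - 2 * k) * bet ν k

lemma hasSum_ec (q z : ℂ) : HasSum (fun n => ec q n * z ^ n) (Complex.exp (q * z)) := by
  have h := NormedSpace.expSeries_div_hasSum_exp (q * z)
  rw [← Complex.exp_eq_exp_ℂ] at h
  convert h using 2 with n
  · rfl
  rw [ec, mul_pow]
  ring

/-- convolution coefficients of `exp (q z) * modBesselSeries ν z` -/
noncomputable def cv (ν q : ℂ) (n : ℕ) : ℂ :=
  ∑ i ∈ Finset.range (n + 1), ec q i * bb ν (n - i)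

/-- coefficient extraction -/
lemma iteratedDeriv_eq_of_hasSum {f : ℂ → ℂ} {c : ℕ → ℂ}
    (h : ∀ z : ℂ, HasSum (fun n => c n * z ^ n) (f z)) (n : ℕ) :
    iteratedDeriv n f 0 = (Nat.factorial n : ℂ) * c n := by
  set P := FormalMultilinearSeries.ofScalars ℂ c with hP
  have hr : P.radius = ⊤ := by
    apply P.radius_eq_top_of_summable_norm
    intro r
    have hs : Summable fun n => ‖c n * ((r : ℝ) : ℂ) ^ n‖ :=
      summable_norm_iff.mpr (h ((r : ℝ) : ℂ)).summable
    convert hs using 2 with n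
    rw [norm_mul, norm_pow, Complex.norm_real, Real.norm_eq_abs, NNReal.abs_eq,
      FormalMultilinearSeries.ofScalars_norm]
  have hb : HasFPowerSeriesOnBall f P 0 ⊤ := by
    refine ⟨hr.ge, by simp, fun {y} _ => ?_⟩
    have := h y
    simp only [zero_add]
    convert this using 2 with m
    · rfl
    rw [hP, FormalMultilinearSeries.ofScalars_apply_eq, smul_eq_mul]
  have hfs := hb.factorial_smul (1 : ℂ) n
  rw [iteratedDeriv_eq_iteratedFDeriv, ← hfs, hP,
    FormalMultilinearSeries.ofScalars_apply_eq, one_pow, smul_eq_mul, mul_one, nsmul_eq_mul]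


lemma ec_zero (q : ℂ) : ec q 0 = 1 := by simp [ec]

lemma ec_succ (q : ℂ) (j : ℕ) : ((j : ℂ) + 1) * ec q (j + 1) = q * ec q j := by
  have h1 : ((j : ℂ) + 1) ≠ 0 := Nat.cast_add_one_ne_zero j
  have h2 : ((Nat.factorial j : ℕ) : ℂ) ≠ 0 := Nat.cast_ne_zero.2 (Nat.factorial_ne_zero j)
  rw [ec, ec, Nat.factorial_succ]
  push_cast
  field_simp
  ring

lemma ec_succ2 (q : ℂ) (j : ℕ) :
    ((j : ℂ) + 2) * ((j : ℂ) + 1) * ec q (j + 2) = q ^ 2 * ec q j := by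
  have h1 := ec_succ q (j + 1)
  have h2 := ec_succ q j
  push_cast at h1
  linear_combination ((j : ℂ) + 1) * h1 + q * h2

lemma cv_eq_d (ν q : ℂ) (n : ℕ) : cv ν q n = d ν q n := by
  rw [cv, d]
  rw [← Finset.sum_filter_of_ne (p := fun i => 2 ∣ (n - i))
    (f := fun i => ec q i * bb ν (n - i)) (by
      intro i _ hne
      by_contra hdvd
      exact hne (by simp [bb, hdvd]))]
  refine (Finset.sum_nbij' (i := fun k => n - 2 * k) (j := fun i => (n - i) / 2) ?_ ?_ ?_ ?_ ?_).symm
  · intro k hk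
    simp only [Finset.mem_range, Finset.mem_filter] at hk ⊢
    omega
  · intro i hi
    simp only [Finset.mem_range, Finset.mem_filter] at hi ⊢
    omega
  · intro k hk
    simp only [Finset.mem_range] at hk
    show (n - (n - 2 * k)) / 2 = k
    omega
  · intro i hi
    simp only [Finset.mem_range, Finset.mem_filter] at hi
    show n - 2 * ((n - i) / 2) = i
    omega
  · intro k hk
    simp only [Finset.mem_range] at hk
    have h2k : 2 * k ≤ n := by omega
    have h1 : n - (n - 2 * k) = 2 * k := by omega
    rw [h1, bb, if_pos ⟨k, by ring⟩, Nat.mul_div_cancel_left k (by norm_num)]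

section hv
variable {ν : ℂ} (hν : ∀ n : ℕ, 2 * ν + (n : ℂ) + 1 ≠ 0)
include hν

lemma arg_ne (k : ℕ) : ν + (k : ℂ) + 1 ≠ 0 := by
  intro h
  exact hν (2 * k + 1) (by push_cast; linear_combination 2 * h)

lemma Gamma_ne (k : ℕ) : Complex.Gamma (ν + (k : ℂ) + 1) ≠ 0 := by
  apply Complex.Gamma_ne_zero
  intro m h
  apply hν (2 * (k + m) + 1)
  push_cast
  linear_combination 2 * h

lemma bet_ne (k : ℕ) : bet ν k ≠ 0 := by
  simp only [bet, ne_eq, inv_eq_zero, mul_eq_zero, not_or]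
  push_neg
  refine ⟨⟨pow_ne_zero _ (by norm_num), Nat.cast_ne_zero.2 (Nat.factorial_ne_zero k)⟩, Gamma_ne hν k⟩

lemma bet_succ (k : ℕ) :
    bet ν k = 4 * ((k : ℂ) + 1) * (ν + (k : ℂ) + 1) * bet ν (k + 1) := by
  have h1 : Complex.Gamma (ν + ((k + 1 : ℕ) : ℂ) + 1) = (ν + (k : ℂ) + 1) * Complex.Gamma (ν + (k : ℂ) + 1) := by
    have h0 := Complex.Gamma_add_one (ν + (k : ℂ) + 1) (arg_ne hν k)
    rw [← h0]
    push_cast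
    ring_nf
  have hne : (4 * ((k : ℂ) + 1) * (ν + (k : ℂ) + 1)) ≠ 0 :=
    mul_ne_zero (mul_ne_zero (by norm_num) (Nat.cast_add_one_ne_zero k)) (arg_ne hν k)
  have hA : (4 : ℂ) ^ (k + 1) * ((Nat.factorial (k + 1) : ℕ) : ℂ) * Complex.Gamma (ν + ((k + 1 : ℕ) : ℂ) + 1) =
      (4 * ((k : ℂ) + 1) * (ν + (k : ℂ) + 1)) * ((4 : ℂ) ^ k * (Nat.factorial k : ℂ) * Complex.Gamma (ν + (k : ℂ) + 1)) := by
    rw [h1, pow_succ, Nat.factorial_succ]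
    push_cast
    ring
  rw [bet, bet, hA]
  conv_rhs => rw [mul_inv, ← mul_assoc, mul_inv_cancel₀ hne, one_mul]

lemma hasSum_G (z : ℂ) :
    HasSum (fun k => z ^ (2 * k) * bet ν k) (modBesselSeries ν z) := by
  have hsum : Summable (fun k => z ^ (2 * k) * bet ν k) := by
    apply summable_of_ratio_norm_eventually_le (r := 1 / 2) (by norm_num)
    filter_upwards [Filter.eventually_ge_atTop ⌈‖z‖ ^ 2 + ‖ν‖ + 1⌉₊] with k hk
    have hk' : ‖z‖ ^ 2 + ‖ν‖ + 1 ≤ (k : ℝ) := (Nat.ceil_le.mp le_rfl).trans (Nat.cast_le.2 hk)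
    have hb : bet ν k = 4 * ((k : ℂ) + 1) * (ν + (k : ℂ) + 1) * bet ν (k + 1) := bet_succ hν k
    have h3 : ‖((k : ℂ) + 1)‖ = (k : ℝ) + 1 := by
      have : ((k : ℂ) + 1) = ((k + 1 : ℕ) : ℂ) := by push_cast; ring
      rw [this, Complex.norm_natCast]; push_cast; ring
    have h1 : (k : ℝ) + 1 - ‖ν‖ ≤ ‖ν + (k : ℂ) + 1‖ := by
      have h2 : ‖((k : ℂ) + 1)‖ - ‖-ν‖ ≤ ‖((k : ℂ) + 1) - -ν‖ := norm_sub_norm_le _ _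
      have h4 : ((k : ℂ) + 1) - -ν = ν + (k : ℂ) + 1 := by ring
      rw [h4, h3, norm_neg] at h2
      exact h2
    have key : ‖z‖ ^ 2 ≤ 1 / 2 * ‖4 * ((k : ℂ) + 1) * (ν + (k : ℂ) + 1)‖ := by
      rw [norm_mul, norm_mul, h3]
      have h5 : ‖(4 : ℂ)‖ = 4 := by norm_num
      rw [h5]
      nlinarith [norm_nonneg ν, norm_nonneg (ν + (k : ℂ) + 1), sq_nonneg (‖z‖)]
    calc ‖z ^ (2 * (k + 1)) * bet ν (k + 1)‖
        = ‖z‖ ^ 2 * (‖z‖ ^ (2 * k) * ‖bet ν (k + 1)‖) := by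
          rw [norm_mul, norm_pow]; ring
      _ ≤ (1 / 2 * ‖4 * ((k : ℂ) + 1) * (ν + (k : ℂ) + 1)‖) * (‖z‖ ^ (2 * k) * ‖bet ν (k + 1)‖) := by
          gcongr
      _ = 1 / 2 * ‖z ^ (2 * k) * bet ν k‖ := by
          rw [hb]
          simp only [norm_mul, norm_pow, h3]
          ring
  have heq : modBesselSeries ν z = ∑' k, z ^ (2 * k) * bet ν k :=
    tsum_congr fun k => by rw [div_eq_mul_inv, bet]
  rw [heq]
  exact hsum.hasSum

lemma hasSum_bb (z : ℂ) :
    HasSum (fun n => bb ν n * z ^ n) (modBesselSeries ν z) := by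
  have hinj : Function.Injective (fun k : ℕ => 2 * k) := fun a b h => by simpa using h
  rw [← Function.Injective.hasSum_iff hinj (by
    intro n hn
    have : ¬ 2 ∣ n := by
      intro ⟨c, hc⟩; exact hn ⟨c, by simpa using hc.symm⟩
    simp [bb, this])]
  have : (fun n => bb ν n * z ^ n) ∘ (fun k : ℕ => 2 * k) = fun k => z ^ (2 * k) * bet ν k := by
    funext k
    simp only [Function.comp, bb]
    rw [if_pos ⟨k, by ring⟩]
    rw [Nat.mul_div_cancel_left k (by norm_num)]
    ring
  rw [this]
  exact hasSum_G hν z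

lemma hasSum_cv (q z : ℂ) :
    HasSum (fun n => cv ν q n * z ^ n) (Complex.exp (q * z) * modBesselSeries ν z) := by
  have hf : Summable fun n => ‖ec q n * z ^ n‖ :=
    summable_norm_iff.mpr (hasSum_ec q z).summable
  have hg : Summable fun n => ‖bb ν n * z ^ n‖ :=
    summable_norm_iff.mpr (hasSum_bb hν z).summable
  have hsum := (summable_norm_sum_mul_range_of_summable_norm hf hg).of_norm
  have htsum := tsum_mul_tsum_eq_tsum_sum_range_of_summable_norm hf hg
  rw [(hasSum_ec q z).tsum_eq, (hasSum_bb hν z).tsum_eq] at htsum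
  have h2 : HasSum (fun n => ∑ i ∈ Finset.range (n + 1), (ec q i * z ^ i) * (bb ν (n - i) * z ^ (n - i)))
      (Complex.exp (q * z) * modBesselSeries ν z) := by
    rw [htsum]
    exact hsum.hasSum
  convert h2 using 2 with n
  rw [cv, Finset.sum_mul]
  apply Finset.sum_congr rfl
  intro i hi
  have hin : i ≤ n := Nat.lt_succ_iff.mp (Finset.mem_range.mp hi)
  have : z ^ i * z ^ (n - i) = z ^ n := by
    rw [← pow_add]
    congr 1
    omega
  calc ec q i * bb ν (n - i) * z ^ n = ec q i * bb ν (n - i) * (z ^ i * z ^ (n - i)) := by rw [this]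
    _ = ec q i * z ^ i * (bb ν (n - i) * z ^ (n - i)) := by ring

omit hν in
lemma normCoeff_eq_of_hasSum {h : ℂ → ℂ} {c : ℕ → ℂ}
    (hs : ∀ z : ℂ, HasSum (fun n => c n * z ^ n) (h z * modBesselSeries ν z)) (n : ℕ) :
    normCoeff ν h n = Complex.Gamma (ν + 1) * c n := by
  rw [normCoeff, iteratedDeriv_eq_of_hasSum hs n, mul_comm ((Nat.factorial n : ℕ) : ℂ) (c n),
    mul_div_assoc, div_self (Nat.cast_ne_zero.2 (Nat.factorial_ne_zero n)), mul_one]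


lemma d_rec (q : ℂ) (n : ℕ) (hn : 1 ≤ n) :
    ((n : ℂ) + 1) * (2 * ν + (n : ℂ) + 1) * d ν q (n + 1) =
      q * (2 * ν + 2 * (n : ℂ) + 1) * d ν q n + (1 - q ^ 2) * d ν q (n - 1) := by
  set N := (n + 1) / 2 with hN
  set T : ℕ → ℂ := fun k => ec q (n + 1 - 2 * k) * bet ν k with hT
  have L1 : d ν q (n + 1) = ∑ k ∈ Finset.range (N + 1), T k := rfl
  have L2 : q * d ν q n = ∑ k ∈ Finset.range (N + 1), ((n : ℂ) + 1 - 2 * k) * T k := by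
    rw [d, Finset.mul_sum]
    rw [← Finset.sum_subset (Finset.range_subset_range.2 (by omega : n / 2 + 1 ≤ N + 1)) ?_]
    · refine Finset.sum_congr rfl fun k hk => ?_
      have h2k : 2 * k ≤ n := by
        have := Finset.mem_range.mp hk; omega
      have h1 : n + 1 - 2 * k = (n - 2 * k) + 1 := by omega
      have hc : ((n - 2 * k : ℕ) : ℂ) = (n : ℂ) - 2 * (k : ℂ) := by
        push_cast [h2k]; ring
      have h2 : ((n : ℂ) + 1 - 2 * (k : ℂ)) = ((n - 2 * k : ℕ) : ℂ) + 1 := by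
        rw [hc]; ring
      rw [hT]
      simp only
      rw [h1, h2]
      linear_combination (-(bet ν k)) * ec_succ q (n - 2 * k)
    · intro k hk hk2
      simp only [Finset.mem_range] at hk hk2
      have h2k : 2 * k = n + 1 := by omega
      have hz : (n : ℂ) + 1 - 2 * (k : ℂ) = 0 := by
        have : ((n + 1 : ℕ) : ℂ) = ((2 * k : ℕ) : ℂ) := by rw [h2k]
        push_cast at this
        linear_combination this
      rw [hz, zero_mul]
  have L3 : q ^ 2 * d ν q (n - 1) =
      ∑ k ∈ Finset.range (N + 1), ((n : ℂ) - 2 * k) * ((n : ℂ) + 1 - 2 * k) * T k := by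
    rw [d, Finset.mul_sum]
    rw [← Finset.sum_subset (Finset.range_subset_range.2 (by omega : (n - 1) / 2 + 1 ≤ N + 1)) ?_]
    · refine Finset.sum_congr rfl fun k hk => ?_
      have h2k : 2 * k ≤ n - 1 := by
        have := Finset.mem_range.mp hk; omega
      have h2k' : 2 * k + 1 ≤ n := by omega
      have h1 : n + 1 - 2 * k = (n - 1 - 2 * k) + 2 := by omega
      have hc : ((n - 1 - 2 * k : ℕ) : ℂ) = (n : ℂ) - 1 - 2 * (k : ℂ) := by
        have : ((n - 1 - 2 * k : ℕ) : ℂ) = ((n - (1 + 2 * k) : ℕ) : ℂ) := by congr 1; omega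
        rw [this]
        push_cast [(by omega : 1 + 2 * k ≤ n)]
        ring
      have h2 : ((n : ℂ) + 1 - 2 * (k : ℂ)) = ((n - 1 - 2 * k : ℕ) : ℂ) + 2 := by rw [hc]; ring
      have h3 : ((n : ℂ) - 2 * (k : ℂ)) = ((n - 1 - 2 * k : ℕ) : ℂ) + 1 := by rw [hc]; ring
      rw [hT]
      simp only
      rw [h1, h2, h3]
      linear_combination (-(bet ν k)) * ec_succ2 q (n - 1 - 2 * k)
    · intro k hk hk2
      simp only [Finset.mem_range] at hk hk2
      have h2k : 2 * k = n ∨ 2 * k = n + 1 := by omega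
      rcases h2k with h | h
      · have hz : (n : ℂ) - 2 * (k : ℂ) = 0 := by
          have : ((n : ℕ) : ℂ) = ((2 * k : ℕ) : ℂ) := by rw [h]
          push_cast at this
          linear_combination this
        rw [hz, zero_mul, zero_mul]
      · have hz : (n : ℂ) + 1 - 2 * (k : ℂ) = 0 := by
          have : ((n + 1 : ℕ) : ℂ) = ((2 * k : ℕ) : ℂ) := by rw [h]
          push_cast at this
          linear_combination this
        rw [hz, mul_zero, zero_mul]
  have L4 : d ν q (n - 1) = ∑ k ∈ Finset.range (N + 1), 4 * (k : ℂ) * (ν + k) * T k := by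
    rw [Finset.sum_range_succ']
    have hg0 : 4 * ((0 : ℕ) : ℂ) * (ν + (0 : ℕ)) * T 0 = 0 := by
      push_cast; ring
    rw [hg0, add_zero]
    have hNe : N = (n - 1) / 2 + 1 := by omega
    rw [d, ← hNe]
    refine Finset.sum_congr rfl fun k hk => ?_
    have h1 : n + 1 - 2 * (k + 1) = n - 1 - 2 * k := by omega
    rw [hT]
    simp only
    rw [h1]
    have hb := bet_succ hν k
    push_cast
    rw [hb]
    ring
  calc ((n : ℂ) + 1) * (2 * ν + (n : ℂ) + 1) * d ν q (n + 1)
      = ∑ k ∈ Finset.range (N + 1), (((n : ℂ) + 1) * (2 * ν + (n : ℂ) + 1)) * T k := by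
        rw [L1, Finset.mul_sum]
    _ = ∑ k ∈ Finset.range (N + 1),
        ((2 * ν + 2 * (n : ℂ) + 1) * (((n : ℂ) + 1 - 2 * k) * T k)
          + 4 * (k : ℂ) * (ν + k) * T k
          - ((n : ℂ) - 2 * k) * ((n : ℂ) + 1 - 2 * k) * T k) := by
        refine Finset.sum_congr rfl fun k _ => ?_
        ring
    _ = (2 * ν + 2 * (n : ℂ) + 1) * (q * d ν q n) + d ν q (n - 1) - q ^ 2 * d ν q (n - 1) := by
        rw [Finset.sum_sub_distrib, Finset.sum_add_distrib, ← Finset.mul_sum, ← L2, ← L3, ← L4]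
    _ = q * (2 * ν + 2 * (n : ℂ) + 1) * d ν q n + (1 - q ^ 2) * d ν q (n - 1) := by ring

lemma hasSum_sinh (p z : ℂ) :
    HasSum (fun n => ((cv ν p n - cv ν (-p) n) / 2) * z ^ n)
      (Complex.sinh (p * z) * modBesselSeries ν z) := by
  have h3 := ((hasSum_cv hν p z).sub (hasSum_cv hν (-p) z)).div_const 2
  have hv : Complex.sinh (p * z) * modBesselSeries ν z =
      (Complex.exp (p * z) * modBesselSeries ν z - Complex.exp (-p * z) * modBesselSeries ν z) / 2 := by
    rw [Complex.sinh, neg_mul]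
    ring
  rw [hv]
  convert h3 using 2 with n
  · rfl
  ring

end hv

lemma d_zero (ν q : ℂ) : d ν q 0 = (Complex.Gamma (ν + 1))⁻¹ := by
  simp [d, ec, bet]

lemma d_one (ν q : ℂ) : d ν q 1 = q * (Complex.Gamma (ν + 1))⁻¹ := by
  simp [d, ec, bet]

end SinhBessel


theorem sinh_besselI_coeff_recurrence (ν p : ℂ) (hν : ∀ n : ℕ, 2 * ν + (n : ℂ) + 1 ≠ 0)
    (u : ℕ → ℂ) (hu : ∀ n, u n = normCoeff ν (fun z => Complex.exp (p * z)) n)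
    (v : ℕ → ℂ) (hv : ∀ n, v n = normCoeff ν (fun z => Complex.exp (-p * z)) n)
    (w : ℕ → ℂ) (hw : ∀ n, w n = normCoeff ν (fun z => Complex.sinh (p * z)) n) :
    (∀ n : ℕ, w n = (u n - v n) / 2) ∧ u 0 = 1 ∧ u 1 = p ∧ v 0 = 1 ∧ v 1 = -p ∧
    (∀ n : ℕ, 1 ≤ n →
      u (n + 1) = (p * (2 * ν + 2 * ((n : ℂ)) + 1) / ((((n : ℂ)) + 1) * (2 * ν + ((n : ℂ)) + 1))) * u n + ((1 - p ^ 2) / ((((n : ℂ)) + 1) * (2 * ν + ((n : ℂ)) + 1))) * u (n - 1) ∧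
      v (n + 1) = (-(p * (2 * ν + 2 * ((n : ℂ)) + 1)) / ((((n : ℂ)) + 1) * (2 * ν + ((n : ℂ)) + 1))) * v n + ((1 - p ^ 2) / ((((n : ℂ)) + 1) * (2 * ν + ((n : ℂ)) + 1))) * v (n - 1)) := by
  
  open SinhBessel in
  have hG : Complex.Gamma (ν + 1) ≠ 0 := by
    have := Gamma_ne hν 0
    simpa using this
  have hu' : ∀ n, u n = Complex.Gamma (ν + 1) * d ν p n := fun n => by
    rw [hu n, normCoeff_eq_of_hasSum (fun z => hasSum_cv hν p z) n, cv_eq_d]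
  have hv' : ∀ n, v n = Complex.Gamma (ν + 1) * d ν (-p) n := fun n => by
    rw [hv n, normCoeff_eq_of_hasSum (fun z => hasSum_cv hν (-p) z) n, cv_eq_d]
  have hw' : ∀ n, w n = Complex.Gamma (ν + 1) * ((d ν p n - d ν (-p) n) / 2) := fun n => by
    rw [hw n, normCoeff_eq_of_hasSum (fun z => hasSum_sinh hν p z) n, cv_eq_d, cv_eq_d]
  refine ⟨fun n => by rw [hw' n, hu' n, hv' n]; ring, ?_, ?_, ?_, ?_, ?_⟩
  · rw [hu' 0, d_zero, mul_inv_cancel₀ hG]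
  · rw [hu' 1, d_one, ← mul_assoc, mul_comm (Complex.Gamma (ν + 1)) p, mul_assoc,
      mul_inv_cancel₀ hG, mul_one]
  · rw [hv' 0, d_zero, mul_inv_cancel₀ hG]
  · rw [hv' 1, d_one, ← mul_assoc, mul_comm (Complex.Gamma (ν + 1)) (-p), mul_assoc,
      mul_inv_cancel₀ hG, mul_one]
  · intro n hn
    have hden : (((n : ℂ)) + 1) * (2 * ν + ((n : ℂ)) + 1) ≠ 0 :=
      mul_ne_zero (Nat.cast_add_one_ne_zero n) (hν n)
    have hrec1 := d_rec hν p n hn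
    have hrec2 := d_rec hν (-p) n hn
    constructor
    · rw [hu' (n + 1), hu' n, hu' (n - 1)]
      -- push_cast
      rw [div_mul_eq_mul_div, div_mul_eq_mul_div, ← add_div, eq_div_iff hden]
      linear_combination Complex.Gamma (ν + 1) * hrec1
    · rw [hv' (n + 1), hv' n, hv' (n - 1)]
      -- push_cast
      rw [div_mul_eq_mul_div, div_mul_eq_mul_div, ← add_div, eq_div_iff hden]
      linear_combination Complex.Gamma (ν + 1) * hrec2
end

section
/- Let u_n and v_n be the normalized Maclaurin coefficients of e^{ipz}·I_ν(z) and of e^{−ipz}·I_ν(z) respectively (i denotes the imaginary unit). Then the n-th normalized Maclaurin coefficient of sin(pz)·I_ν(z) equals (u_n − v_n)/(2i) for every n ≥ 0; moreover u_0 = 1, u_1 = ip, v_0 = 1, v_1 = −ip, and for every n ≥ 1: u_{n+1} = (ip(2ν+2n+1)/((n+1)(2ν+n+1)))·u_n + ((p²+1)/((n+1)(2ν+n+1)))·u_{n−1} and v_{n+1} = −(ip(2ν+2n+1)/((n+1)(2ν+n+1)))·v_n + ((p²+1)/((n+1)(2ν+n+1)))·v_{n−1}. -/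
open Complex

open Finset

set_option linter.dupNamespace false

namespace SB

noncomputable def bC (ν : ℂ) (k : ℕ) : ℂ :=
  (4 ^ k * (Nat.factorial k : ℂ) * Complex.Gamma (ν + (k : ℂ) + 1))⁻¹

noncomputable def B (ν : ℂ) (n : ℕ) : ℂ := if 2 ∣ n then bC ν (n / 2) else 0

noncomputable def eC (a : ℂ) (m : ℕ) : ℂ := a ^ m / (Nat.factorial m : ℂ)

noncomputable def conv (ν a : ℂ) (n : ℕ) : ℂ :=
  ∑ q ∈ Finset.HasAntidiagonal.antidiagonal n, eC a q.1 * B ν q.2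

variable {ν : ℂ} (hν : ∀ n : ℕ, 2 * ν + (n : ℂ) + 1 ≠ 0)
include hν

lemma gamma_ne (m : ℕ) : Complex.Gamma (ν + (m : ℂ) + 1) ≠ 0 := by
  apply Complex.Gamma_ne_zero
  intro t ht
  apply hν (2 * m + 2 * t + 1)
  push_cast
  linear_combination 2 * ht

lemma bC_ne (k : ℕ) : bC ν k ≠ 0 := by
  apply inv_ne_zero
  exact mul_ne_zero (mul_ne_zero (pow_ne_zero _ (by norm_num))
    (Nat.cast_ne_zero.mpr (Nat.factorial_ne_zero k))) (gamma_ne hν k)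

lemma nuk_ne (k : ℕ) : ν + (k : ℂ) + 1 ≠ 0 := by
  intro h
  apply hν (2 * k + 1)
  push_cast
  linear_combination 2 * h

lemma bC_rec (k : ℕ) : (4 * ((k : ℂ) + 1) * (ν + (k : ℂ) + 1)) * bC ν (k + 1) = bC ν k := by
  have hG : Complex.Gamma (ν + ((k : ℕ) + 1 : ℂ) + 1) = (ν + k + 1) * Complex.Gamma (ν + k + 1) := by
    have := Complex.Gamma_add_one (ν + k + 1) (nuk_ne hν k)
    rw [← this]
    ring_nf
  have h1 : ((k:ℂ)+1) ≠ 0 := Nat.cast_add_one_ne_zero k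
  have h2 : ν + (k:ℂ) + 1 ≠ 0 := nuk_ne hν k
  have h3 : (Nat.factorial k : ℂ) ≠ 0 := Nat.cast_ne_zero.mpr (Nat.factorial_ne_zero k)
  have h4 : (4:ℂ) ^ k ≠ 0 := pow_ne_zero _ (by norm_num)
  have h5 := gamma_ne hν k
  unfold bC
  push_cast
  rw [hG, Nat.factorial_succ]
  push_cast
  field_simp
  ring
lemma B_rec (j : ℕ) : (((j : ℕ) : ℂ) + 2) * (2 * ν + ((j : ℂ) + 2)) * B ν (j + 2) = B ν j := by
  rcases Nat.even_or_odd j with ⟨k, rfl⟩ | hodd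
  · have hd1 : 2 ∣ k + k + 2 := ⟨k + 1, by ring⟩
    have hd2 : 2 ∣ k + k := ⟨k, by ring⟩
    have he1 : (k + k + 2) / 2 = k + 1 := by omega
    have he2 : (k + k) / 2 = k := by omega
    unfold B
    rw [if_pos hd1, if_pos hd2, he1, he2]
    have := bC_rec hν k
    push_cast
    linear_combination this
  · rw [Nat.odd_iff] at hodd
    have h1 : ¬ 2 ∣ j + 2 := by omega
    have h2 : ¬ 2 ∣ j := by omega
    unfold B
    rw [if_neg h1, if_neg h2, mul_zero]

omit hν

lemma eC_succ (a : ℂ) (i : ℕ) : ((i : ℂ) + 1) * eC a (i + 1) = a * eC a i := by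
  have h3 : (Nat.factorial i : ℂ) ≠ 0 := Nat.cast_ne_zero.mpr (Nat.factorial_ne_zero i)
  have h1 : ((i:ℂ)+1) ≠ 0 := Nat.cast_add_one_ne_zero i
  unfold eC
  rw [Nat.factorial_succ]
  push_cast
  field_simp
  ring

lemma B_one : B ν 1 = 0 := by unfold B; norm_num

/-- pointwise sums give a power series on the whole plane -/
lemma hasFPS {f : ℂ → ℂ} {c : ℕ → ℂ} (h : ∀ z, HasSum (fun n ↦ c n * z ^ n) (f z)) :
    HasFPowerSeriesOnBall f (FormalMultilinearSeries.ofScalars ℂ c) 0 ⊤ := by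
  have hrad : (FormalMultilinearSeries.ofScalars ℂ c).radius = ⊤ := by
    apply ENNReal.eq_top_of_forall_nnreal_le
    intro r
    apply FormalMultilinearSeries.le_radius_of_tendsto _ (l := 0)
    have h2 := ((h ((r : ℝ) : ℂ)).summable.tendsto_atTop_zero).norm
    rw [norm_zero] at h2
    convert h2 using 2 with n
    rw [FormalMultilinearSeries.ofScalars_norm, norm_mul, norm_pow, Complex.norm_real,
      Real.norm_eq_abs, _root_.abs_of_nonneg r.coe_nonneg]
  refine ⟨le_of_eq hrad.symm, ENNReal.zero_lt_top , ?_⟩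
  intro y _
  have := h y
  simp only [FormalMultilinearSeries.ofScalars_apply_eq, smul_eq_mul, zero_add]
  exact this

lemma iteratedDeriv_of_hasSum {f : ℂ → ℂ} {c : ℕ → ℂ}
    (h : ∀ z, HasSum (fun n ↦ c n * z ^ n) (f z)) (n : ℕ) :
    iteratedDeriv n f 0 = (Nat.factorial n : ℂ) * c n := by
  have H := (hasFPS h).factorial_smul (1 : ℂ) n
  rw [FormalMultilinearSeries.ofScalars_apply_eq] at H
  simp only [one_pow, smul_eq_mul, mul_one] at H
  rw [iteratedDeriv, ← H]
  simp

include hν in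
lemma bC_key (z : ℂ) (k : ℕ) :
    bC ν (k + 1) * z ^ (2 * (k + 1)) =
      (bC ν k * z ^ (2 * k)) * (z ^ 2 / (4 * ((k : ℂ) + 1) * (ν + (k : ℂ) + 1))) := by
  have h := bC_rec hν k
  have h1 : ((k : ℂ) + 1) ≠ 0 := Nat.cast_add_one_ne_zero k
  have h2 := nuk_ne hν k
  have hp : 2 * (k + 1) = 2 * k + 2 := by ring
  rw [hp, pow_add]
  field_simp
  linear_combination z ^ (2 * k) * z ^ 2 * h

include hν in
lemma summable_norm_bessel (z : ℂ) : Summable (fun k ↦ ‖bC ν k * z ^ (2 * k)‖) := by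
  rcases eq_or_ne z 0 with rfl | hz
  · apply summable_of_ne_finset_zero (s := {0})
    intro k hk
    have hk0 : 2 * k ≠ 0 := by simp at hk; omega
    simp [zero_pow hk0]
  · have hne : ∀ k, bC ν k * z ^ (2 * k) ≠ 0 :=
      fun k => mul_ne_zero (bC_ne hν k) (pow_ne_zero _ hz)
    apply summable_of_ratio_test_tendsto_lt_one zero_lt_one
    · filter_upwards with k
      simp only [ne_eq, norm_eq_zero]
      exact hne k
    · have hfun : (fun k ↦ ‖‖bC ν (k + 1) * z ^ (2 * (k + 1))‖‖ / ‖‖bC ν k * z ^ (2 * k)‖‖)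
          = fun (k : ℕ) ↦ ‖z ^ 2‖ / ‖4 * ((k : ℂ) + 1) * (ν + (k : ℂ) + 1)‖ := by
        funext k
        rw [Real.norm_of_nonneg (norm_nonneg _), Real.norm_of_nonneg (norm_nonneg _),
          bC_key hν z k, norm_mul, norm_div]
        rw [mul_comm, mul_div_assoc, div_self (norm_ne_zero_iff.mpr (hne k)), mul_one]
      rw [hfun]
      apply Filter.Tendsto.div_atTop tendsto_const_nhds
      apply Filter.tendsto_atTop_mono' _ (_ : ∀ᶠ k : ℕ in Filter.atTop,
        ((k : ℝ) + (1 - ‖ν‖)) ≤ ‖4 * ((k : ℂ) + 1) * (ν + (k : ℂ) + 1)‖)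
      · exact Filter.tendsto_atTop_add_const_right _ _ tendsto_natCast_atTop_atTop
      · filter_upwards with k
        have step1 : ‖ν + (k : ℂ) + 1‖ ≤ ‖4 * ((k : ℂ) + 1) * (ν + (k : ℂ) + 1)‖ := by
          rw [norm_mul]
          apply le_mul_of_one_le_left (norm_nonneg _)
          rw [norm_mul]
          have : (1 : ℝ) ≤ ‖((k : ℂ) + 1)‖ := by
            have : ((k : ℂ) + 1) = ((k + 1 : ℕ) : ℂ) := by push_cast; ring
            rw [this, Complex.norm_natCast]
            exact_mod_cast Nat.one_le_iff_ne_zero.mpr (Nat.succ_ne_zero k)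
          calc (1:ℝ) ≤ ‖((k:ℂ)+1)‖ := this
          _ ≤ ‖(4:ℂ)‖ * ‖((k:ℂ)+1)‖ := le_mul_of_one_le_left (norm_nonneg _) (by norm_num)
        have step2 : (k : ℝ) + (1 - ‖ν‖) ≤ ‖ν + (k : ℂ) + 1‖ := by
          have h3 := norm_sub_norm_le ((k : ℂ) + 1) (-ν)
          have h4 : ‖((k : ℂ) + 1)‖ = (k : ℝ) + 1 := by
            have : ((k : ℂ) + 1) = ((k + 1 : ℕ) : ℂ) := by push_cast; ring
            rw [this, Complex.norm_natCast]; push_cast; ring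
          rw [norm_neg, h4] at h3
          have h5 : (k : ℂ) + 1 - -ν = ν + (k : ℂ) + 1 := by ring
          rw [h5] at h3
          linarith
        linarith

include hν in
lemma hasSum_bessel (z : ℂ) : HasSum (fun k ↦ bC ν k * z ^ (2 * k)) (modBesselSeries ν z) := by
  have hs : Summable (fun k ↦ bC ν k * z ^ (2 * k)) := (summable_norm_bessel hν z).of_norm
  have heq : modBesselSeries ν z = ∑' k, bC ν k * z ^ (2 * k) := by
    unfold modBesselSeries bC
    congr 1
    funext k
    rw [div_eq_inv_mul]
  rw [heq]
  exact hs.hasSum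

include hν in
lemma hasSum_B (z : ℂ) : HasSum (fun n ↦ B ν n * z ^ n) (modBesselSeries ν z) := by
  have hinj : Function.Injective (fun k : ℕ => 2 * k) := fun a b h => by dsimp at h; omega
  have hsupp : ∀ n ∉ Set.range (fun k : ℕ => 2 * k), B ν n * z ^ n = 0 := by
    intro n hn
    have : ¬ 2 ∣ n := by
      rintro ⟨k, hk⟩
      exact hn ⟨k, hk.symm⟩
    unfold B
    rw [if_neg this, zero_mul]
  rw [← Function.Injective.hasSum_iff hinj hsupp]
  convert hasSum_bessel hν z using 1
  funext k
  have hd : 2 ∣ 2 * k := ⟨k, rfl⟩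
  simp only [Function.comp_apply]
  unfold B
  rw [if_pos hd, Nat.mul_div_cancel_left k (by norm_num)]

include hν in
lemma summable_norm_B (z : ℂ) : Summable (fun n ↦ ‖B ν n * z ^ n‖) := by
  have hinj : Function.Injective (fun k : ℕ => 2 * k) := fun a b h => by dsimp at h; omega
  have hsupp : ∀ n ∉ Set.range (fun k : ℕ => 2 * k), ‖B ν n * z ^ n‖ = 0 := by
    intro n hn
    have : ¬ 2 ∣ n := by
      rintro ⟨k, hk⟩
      exact hn ⟨k, hk.symm⟩
    unfold B
    rw [if_neg this, zero_mul, norm_zero]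
  rw [← Function.Injective.summable_iff hinj hsupp]
  convert summable_norm_bessel hν z using 1
  funext k
  have hd : 2 ∣ 2 * k := ⟨k, rfl⟩
  simp only [Function.comp_apply]
  unfold B
  rw [if_pos hd, Nat.mul_div_cancel_left k (by norm_num)]

include hν in
lemma hasSum_conv (a z : ℂ) :
    HasSum (fun n ↦ conv ν a n * z ^ n) (Complex.exp (a * z) * modBesselSeries ν z) := by
  have hFeq : ∀ i : ℕ, (a * z) ^ i / (Nat.factorial i : ℂ) = eC a i * z ^ i := by
    intro i
    rw [eC, mul_pow]
    ring
  have hFsum : HasSum (fun i ↦ eC a i * z ^ i) (Complex.exp (a * z)) := by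
    have h := NormedSpace.expSeries_div_hasSum_exp (a * z)
    rw [← Complex.exp_eq_exp_ℂ] at h
    simpa only [hFeq] using h
  have hFnorm : Summable (fun i ↦ ‖eC a i * z ^ i‖) := by
    have h := NormedSpace.norm_expSeries_div_summable (a * z)
    simpa only [hFeq] using h
  have hGsum := hasSum_B hν z
  have hGnorm := summable_norm_B hν z
  have hmul := tsum_mul_tsum_eq_tsum_sum_antidiagonal_of_summable_norm hFnorm hGnorm
  have hsum2 := (summable_norm_sum_mul_antidiagonal_of_summable_norm hFnorm hGnorm).of_norm
  rw [hFsum.tsum_eq, hGsum.tsum_eq] at hmul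
  have hmain := hsum2.hasSum
  rw [← hmul] at hmain
  convert hmain using 1
  · rfl
  funext n
  rw [conv, Finset.sum_mul]
  apply Finset.sum_congr rfl
  intro q hq
  have hq' := Finset.HasAntidiagonal.mem_antidiagonal.mp hq
  rw [← hq', pow_add]
  ring

end SB

namespace SB
variable {ν : ℂ} (hν : ∀ n : ℕ, 2 * ν + (n : ℂ) + 1 ≠ 0)

lemma normCoeff_eq {h : ℂ → ℂ} {c : ℕ → ℂ}
    (hs : ∀ z, HasSum (fun n ↦ c n * z ^ n) (h z * modBesselSeries ν z)) (n : ℕ) :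
    normCoeff ν h n = Complex.Gamma (ν + 1) * c n := by
  have hf : (Nat.factorial n : ℂ) ≠ 0 := Nat.cast_ne_zero.mpr (Nat.factorial_ne_zero n)
  rw [normCoeff, iteratedDeriv_of_hasSum hs n]
  field_simp

include hν in
lemma normCoeff_exp (a : ℂ) (n : ℕ) :
    normCoeff ν (fun z => Complex.exp (a * z)) n = Complex.Gamma (ν + 1) * conv ν a n :=
  normCoeff_eq (fun z => hasSum_conv hν a z) n

include hν in
lemma normCoeff_sin (p : ℂ) (n : ℕ) :
    normCoeff ν (fun z => Complex.sin (p * z)) n =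
      Complex.Gamma (ν + 1) *
        ((conv ν (Complex.I * p) n - conv ν (-(Complex.I * p)) n) / (2 * Complex.I)) := by
  apply normCoeff_eq
  intro z
  have h1 := hasSum_conv hν (Complex.I * p) z
  have h2 := hasSum_conv hν (-(Complex.I * p)) z
  have h3 := (h1.sub h2).div_const (2 * Complex.I)
  convert h3 using 1
  · rfl
  · funext n
    ring
  · have e1 : p * z * Complex.I = Complex.I * p * z := by ring
    have e2 : -(p * z) * Complex.I = -(Complex.I * p) * z := by ring
    have hsin : Complex.sin (p * z) =
        (Complex.exp (Complex.I * p * z) - Complex.exp (-(Complex.I * p) * z)) / (2 * Complex.I) := by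
      rw [Complex.sin, e1, e2]
      generalize Complex.exp (Complex.I * p * z) = X
      generalize Complex.exp (-(Complex.I * p) * z) = Y
      field_simp
      linear_combination (Y - X) * Complex.I_sq
    rw [hsin]
    ring

include hν in
lemma conv_rec (a : ℂ) (m : ℕ) :
    ((m : ℂ) + 2) * (2 * ν + (m : ℂ) + 2) * conv ν a (m + 2)
      = a * (2 * ν + 2 * (m : ℂ) + 3) * conv ν a (m + 1) + (1 - a ^ 2) * conv ν a m := by
  have split : ((m:ℂ)+2) * (2*ν + (m:ℂ)+2) * conv ν a (m+2)
      = (∑ q ∈ Finset.HasAntidiagonal.antidiagonal (m+2), (q.1:ℂ) * (2*ν + 2*(m:ℂ)+3) * (eC a q.1 * B ν q.2))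
        + (∑ q ∈ Finset.HasAntidiagonal.antidiagonal (m+2), (q.2:ℂ) * (2*ν + (q.2:ℂ)) * (eC a q.1 * B ν q.2))
        - (∑ q ∈ Finset.HasAntidiagonal.antidiagonal (m+2), (q.1:ℂ) * ((q.1:ℂ)-1) * (eC a q.1 * B ν q.2)) := by
    rw [conv, Finset.mul_sum, ← Finset.sum_add_distrib, ← Finset.sum_sub_distrib]
    apply Finset.sum_congr rfl
    rintro ⟨i, j⟩ hq
    have hq' : i + j = m + 2 := Finset.HasAntidiagonal.mem_antidiagonal.mp hq
    have hc : (i:ℂ) = (m:ℂ) + 2 - (j:ℂ) := by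
      have h0 : ((i + j : ℕ) : ℂ) = ((m + 2 : ℕ) : ℂ) := by rw [hq']
      push_cast at h0
      linear_combination h0
    simp only
    rw [hc]
    ring
  have H1 : (∑ q ∈ Finset.HasAntidiagonal.antidiagonal (m+2), (q.1:ℂ) * (2*ν + 2*(m:ℂ)+3) * (eC a q.1 * B ν q.2))
      = a * (2*ν + 2*(m:ℂ)+3) * conv ν a (m+1) := by
    rw [show m + 2 = (m+1) + 1 from rfl, Finset.Nat.sum_antidiagonal_succ]
    rw [conv, Finset.mul_sum]
    simp only [Nat.cast_zero, zero_mul, zero_add]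
    apply Finset.sum_congr rfl
    rintro ⟨i, j⟩ hq
    simp only
    push_cast
    linear_combination (2*ν + 2*(m:ℂ)+3) * (B ν j) * eC_succ a i
  have H2 : (∑ q ∈ Finset.HasAntidiagonal.antidiagonal (m+2), (q.2:ℂ) * (2*ν + (q.2:ℂ)) * (eC a q.1 * B ν q.2))
      = conv ν a m := by
    rw [show m + 2 = (m+1) + 1 from rfl, Finset.Nat.sum_antidiagonal_succ']
    rw [Finset.Nat.sum_antidiagonal_succ']
    simp only [Nat.cast_zero, zero_mul, mul_zero, zero_add, B_one]
    rw [conv]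
    apply Finset.sum_congr rfl
    rintro ⟨i, j⟩ hq
    simp only
    push_cast
    linear_combination (eC a i) * B_rec hν j
  have H3 : (∑ q ∈ Finset.HasAntidiagonal.antidiagonal (m+2), (q.1:ℂ) * ((q.1:ℂ)-1) * (eC a q.1 * B ν q.2))
      = a ^ 2 * conv ν a m := by
    rw [show m + 2 = (m+1) + 1 from rfl, Finset.Nat.sum_antidiagonal_succ]
    rw [Finset.Nat.sum_antidiagonal_succ]
    simp only [Nat.cast_zero, zero_mul, zero_add, Nat.cast_one]
    rw [show (1:ℂ) * (1 - 1) * (eC a 1 * B ν (m+1)) = 0 by ring, zero_add]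
    rw [conv, Finset.mul_sum]
    apply Finset.sum_congr rfl
    rintro ⟨i, j⟩ hq
    simp only
    push_cast
    have h1 := eC_succ a (i+1)
    have h2 := eC_succ a i
    push_cast at h1 h2
    linear_combination ((i:ℂ)+1) * B ν j * h1 + a * B ν j * h2
  rw [split, H1, H2, H3]
  ring

lemma conv_zero (a : ℂ) : conv ν a 0 = (Complex.Gamma (ν + 1))⁻¹ := by
  rw [conv]
  simp [eC, B, bC]

lemma conv_one (a : ℂ) : conv ν a 1 = a * (Complex.Gamma (ν + 1))⁻¹ := by
  rw [conv, show (1:ℕ) = 0 + 1 from rfl, Finset.Nat.sum_antidiagonal_succ]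
  simp [eC, B, bC, B_one]

end SB

theorem sin_besselI_coeff_recurrence (ν p : ℂ) (hν : ∀ n : ℕ, 2 * ν + (n : ℂ) + 1 ≠ 0)
    (u : ℕ → ℂ) (hu : ∀ n, u n = normCoeff ν (fun z => Complex.exp (Complex.I * p * z)) n)
    (v : ℕ → ℂ) (hv : ∀ n, v n = normCoeff ν (fun z => Complex.exp (-(Complex.I * p) * z)) n)
    (w : ℕ → ℂ) (hw : ∀ n, w n = normCoeff ν (fun z => Complex.sin (p * z)) n) :
    (∀ n : ℕ, w n = (u n - v n) / (2 * Complex.I)) ∧ u 0 = 1 ∧ u 1 = Complex.I * p ∧ v 0 = 1 ∧ v 1 = -(Complex.I * p) ∧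
    (∀ n : ℕ, 1 ≤ n →
      u (n + 1) = (Complex.I * p * (2 * ν + 2 * ((n : ℂ)) + 1) / ((((n : ℂ)) + 1) * (2 * ν + ((n : ℂ)) + 1))) * u n + ((p ^ 2 + 1) / ((((n : ℂ)) + 1) * (2 * ν + ((n : ℂ)) + 1))) * u (n - 1) ∧
      v (n + 1) = (-(Complex.I * p * (2 * ν + 2 * ((n : ℂ)) + 1)) / ((((n : ℂ)) + 1) * (2 * ν + ((n : ℂ)) + 1))) * v n + ((p ^ 2 + 1) / ((((n : ℂ)) + 1) * (2 * ν + ((n : ℂ)) + 1))) * v (n - 1)) := by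
  have hGam : Complex.Gamma (ν + 1) ≠ 0 := by
    have := SB.gamma_ne hν 0
    simpa using this
  have hu' : ∀ n, u n = Complex.Gamma (ν + 1) * SB.conv ν (Complex.I * p) n := by
    intro n; rw [hu n, SB.normCoeff_exp hν]
  have hv' : ∀ n, v n = Complex.Gamma (ν + 1) * SB.conv ν (-(Complex.I * p)) n := by
    intro n; rw [hv n, SB.normCoeff_exp hν]
  refine ⟨?_, ?_, ?_, ?_, ?_, ?_⟩
  · intro n
    rw [hw n, SB.normCoeff_sin hν, hu' n, hv' n]
    ring
  · rw [hu' 0, SB.conv_zero]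
    exact mul_inv_cancel₀ hGam
  · rw [hu' 1, SB.conv_one, ← mul_assoc, mul_comm (Complex.Gamma (ν+1)) _, mul_assoc,
      mul_inv_cancel₀ hGam, mul_one]
  · rw [hv' 0, SB.conv_zero]
    exact mul_inv_cancel₀ hGam
  · rw [hv' 1, SB.conv_one, ← mul_assoc, mul_comm (Complex.Gamma (ν+1)) _, mul_assoc,
      mul_inv_cancel₀ hGam, mul_one]
  · intro n hn
    obtain ⟨m, rfl⟩ : ∃ m, n = m + 1 := ⟨n - 1, (Nat.succ_pred_eq_of_pos hn).symm⟩
    have hd1 : ((m : ℂ) + 1 + 1) ≠ 0 := by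
      have h0 : (((m + 2 : ℕ)) : ℂ) ≠ 0 := Nat.cast_ne_zero.mpr (by omega)
      push_cast at h0
      intro h; apply h0; linear_combination h
    have hd2 : 2 * ν + ((m : ℂ) + 1) + 1 ≠ 0 := by
      have h0 := hν (m + 1)
      push_cast at h0
      intro h; apply h0; linear_combination h
    constructor
    · have hrec := SB.conv_rec hν (Complex.I * p) m
      have hIp : 1 - (Complex.I * p) ^ 2 = p ^ 2 + 1 := by
        rw [mul_pow, Complex.I_sq]; ring
      rw [hIp] at hrec
      rw [show m + 1 + 1 = m + 2 from rfl, show m + 1 - 1 = m from rfl]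
      rw [div_mul_eq_mul_div, div_mul_eq_mul_div, ← add_div,
        eq_div_iff (mul_ne_zero (by push_cast at hd1 ⊢; exact hd1) (by push_cast at hd2 ⊢; exact hd2))]
      rw [hu' (m + 2), hu' (m + 1), hu' m]
      push_cast
      linear_combination Complex.Gamma (ν + 1) * hrec
    · have hrec := SB.conv_rec hν (-(Complex.I * p)) m
      have hIp : 1 - (-(Complex.I * p)) ^ 2 = p ^ 2 + 1 := by
        rw [neg_pow, mul_pow, Complex.I_sq]; ring
      rw [hIp] at hrec
      rw [show m + 1 + 1 = m + 2 from rfl, show m + 1 - 1 = m from rfl]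
      rw [div_mul_eq_mul_div, div_mul_eq_mul_div, ← add_div,
        eq_div_iff (mul_ne_zero (by push_cast at hd1 ⊢; exact hd1) (by push_cast at hd2 ⊢; exact hd2))]
      rw [hv' (m + 2), hv' (m + 1), hv' m]
      push_cast
      linear_combination Complex.Gamma (ν + 1) * hrec
end
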